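/- arXiv:1612.01205 — 4 statements merged into one kernel-verified Lean document; each statement's English description precedes it below -/
import Mathlib

section
/- (Hölder–Markov–Cauchy–Schwarz tail-moment bound.) Let ρ, σ, Rmax be nonnegative measurable functions on a probability space with Rmax > 0 wherever σ > 0, 0 < E[(ρσ)²], and E[(ρσ)^{2+ε}] < ∞ for some ε > 0. Set C = 2^{2+ε} · E[(ρσ)^{2+ε}]² / E[(ρσ)²]^{2+ε} and assume n ≥ 2·C^{2/ε}·E[σ²/Rmax²]. Then E[ ρ²σ² · 1( ρσ² > Rmax·√( n·E[ρ²σ²]/2 ) ) ] ≤ (1/2)·E[ρ²σ²]. -/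
open MeasureTheory Real
open scoped ENNReal Classical

/-- Hölder–Markov–Cauchy–Schwarz tail-moment bound. -/
theorem tail_moment_bound_sigma
    {Ω : Type*} [MeasurableSpace Ω] (μ : Measure Ω) [IsProbabilityMeasure μ]
    (ρ σ Rmax : Ω → ℝ) (hρm : Measurable ρ) (hσm : Measurable σ) (hRm : Measurable Rmax)
    (hρnn : ∀ ω, 0 ≤ ρ ω) (hσnn : ∀ ω, 0 ≤ σ ω) (hRnn : ∀ ω, 0 ≤ Rmax ω)
    (hRσ : ∀ ω, 0 < σ ω → 0 < Rmax ω)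
    (ε : ℝ) (hε : 0 < ε)
    (hpos : 0 < ∫ ω, (ρ ω * σ ω) ^ 2 ∂μ)
    (hmom : Integrable (fun ω => (ρ ω * σ ω) ^ (2 + ε)) μ)
    (hrat : Integrable (fun ω => σ ω ^ 2 / Rmax ω ^ 2) μ)
    (C : ℝ)
    (hC : C = 2 ^ (2 + ε) * (∫ ω, (ρ ω * σ ω) ^ (2 + ε) ∂μ) ^ 2
      / (∫ ω, (ρ ω * σ ω) ^ 2 ∂μ) ^ (2 + ε))
    (n : ℕ)
    (hn : 2 * C ^ (2 / ε) * (∫ ω, σ ω ^ 2 / Rmax ω ^ 2 ∂μ) ≤ (n : ℝ)) :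
    (∫ ω, (if Rmax ω * Real.sqrt ((n : ℝ) * (∫ ω', (ρ ω' * σ ω') ^ 2 ∂μ) / 2)
          < ρ ω * σ ω ^ 2
        then ρ ω ^ 2 * σ ω ^ 2 else 0) ∂μ)
      ≤ (1 / 2) * ∫ ω, (ρ ω * σ ω) ^ 2 ∂μ := by
  have h2ε : (0:ℝ) < 2 + ε := by linarith
  set M := ∫ ω, (ρ ω * σ ω) ^ 2 ∂μ with hM
  set K := ∫ ω, (ρ ω * σ ω) ^ (2 + ε) ∂μ with hK
  set S := ∫ ω, σ ω ^ 2 / Rmax ω ^ 2 ∂μ with hS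
  set t := Real.sqrt ((n : ℝ) * M / 2) with ht
  have hXm : Measurable fun ω => ρ ω * σ ω := hρm.mul hσm
  have hX2m : Measurable fun ω => (ρ ω * σ ω) ^ 2 := hXm.pow_const 2
  have hXnn : ∀ ω, 0 ≤ ρ ω * σ ω := fun ω => mul_nonneg (hρnn ω) (hσnn ω)
  have hXpow_nn : ∀ ω, 0 ≤ (ρ ω * σ ω) ^ (2 + ε) :=
    fun ω => Real.rpow_nonneg (hXnn ω) _
  -- integrability of X²
  have hX2i : Integrable (fun ω => (ρ ω * σ ω) ^ 2) μ := by
    refine ((integrable_const (1:ℝ)).add hmom).mono' hX2m.aestronglyMeasurable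
      (ae_of_all _ fun ω => ?_)
    rw [Real.norm_of_nonneg (by positivity)]
    simp only [Pi.add_apply]
    rcases le_or_gt (ρ ω * σ ω) 1 with h | h
    · have h0 := hXnn ω
      have : (ρ ω * σ ω) ^ 2 ≤ 1 := by nlinarith
      have := hXpow_nn ω
      linarith
    · have h1 : (1:ℝ) ≤ ρ ω * σ ω := h.le
      have : (ρ ω * σ ω) ^ (2:ℝ) ≤ (ρ ω * σ ω) ^ (2 + ε) :=
        Real.rpow_le_rpow_of_exponent_le h1 (by linarith)
      rw [Real.rpow_two] at this
      linarith
  -- positivity of K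
  have hKnn : 0 ≤ K := integral_nonneg hXpow_nn
  have hKpos : 0 < K := by
    rcases hKnn.lt_or_eq with h | h
    · exact h
    exfalso
    have h0 : (fun ω => (ρ ω * σ ω) ^ (2 + ε)) =ᵐ[μ] 0 := by
      rw [← integral_eq_zero_iff_of_nonneg hXpow_nn hmom]
      exact h.symm
    have h1 : (fun ω => (ρ ω * σ ω) ^ 2) =ᵐ[μ] 0 := by
      filter_upwards [h0] with ω hω
      have : ρ ω * σ ω = 0 := by
        by_contra hne
        have hx : 0 < ρ ω * σ ω := (hXnn ω).lt_of_ne (Ne.symm hne)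
        have := Real.rpow_pos_of_pos hx (2 + ε)
        simp only [Pi.zero_apply] at hω
        linarith
      simp [this]
    have : M = 0 := by
      rw [hM, integral_congr_ae h1]; simp
    linarith
  have hCpos : 0 < C := by
    rw [hC]
    have h1 : (0:ℝ) < 2 ^ (2 + ε) := Real.rpow_pos_of_pos (by norm_num) _
    have h2 : (0:ℝ) < M ^ (2 + ε) := Real.rpow_pos_of_pos hpos _
    positivity
  have hSnn : 0 ≤ S :=
    integral_nonneg fun ω => div_nonneg (sq_nonneg _) (sq_nonneg _)
  -- the LHS integrand as an indicator
  set A : Set Ω := {ω | Rmax ω * t < ρ ω * σ ω ^ 2} with hA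
  have hAm : MeasurableSet A :=
    measurableSet_lt (hRm.mul_const t) (hρm.mul (hσm.pow_const 2))
  have hEq : (fun ω => if Rmax ω * t < ρ ω * σ ω ^ 2 then ρ ω ^ 2 * σ ω ^ 2 else 0)
      = A.indicator (fun ω => (ρ ω * σ ω) ^ 2) := by
    funext ω
    by_cases h : Rmax ω * t < ρ ω * σ ω ^ 2 <;>
      simp [Set.indicator_apply, hA, Set.mem_setOf_eq, h, mul_pow]
  rw [hEq]
  have hIndnn : ∀ ω, 0 ≤ A.indicator (fun ω => (ρ ω * σ ω) ^ 2) ω := fun ω =>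
    Set.indicator_nonneg (fun ω _ => sq_nonneg _) ω
  have hIndi : Integrable (A.indicator fun ω => (ρ ω * σ ω) ^ 2) μ :=
    hX2i.indicator hAm
  set L := ∫ ω, A.indicator (fun ω => (ρ ω * σ ω) ^ 2) ω ∂μ with hL
  have hLnn : 0 ≤ L := integral_nonneg hIndnn
  -- dispatch the degenerate case S = 0
  rcases hSnn.lt_or_eq with hSpos | hS0
  swap
  · -- S = 0 : σ = 0 a.e., so L = 0
    have h0 : (fun ω => σ ω ^ 2 / Rmax ω ^ 2) =ᵐ[μ] 0 := by
      rw [← integral_eq_zero_iff_of_nonneg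
        (fun ω => div_nonneg (sq_nonneg _) (sq_nonneg _)) hrat]
      exact hS0.symm
    have h1 : (A.indicator fun ω => (ρ ω * σ ω) ^ 2) =ᵐ[μ] 0 := by
      filter_upwards [h0] with ω hω
      simp only [Pi.zero_apply] at hω ⊢
      have hσ0 : σ ω = 0 := by
        by_contra hne
        have hσp : 0 < σ ω := (hσnn ω).lt_of_ne (Ne.symm hne)
        have hRp := hRσ ω hσp
        have : 0 < σ ω ^ 2 / Rmax ω ^ 2 := by positivity
        linarith
      by_cases hω' : ω ∈ A <;> simp [Set.indicator_apply, hω', hσ0]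
    have hL0 : L = 0 := by rw [hL, integral_congr_ae h1]; simp
    rw [hL0]
    positivity
  -- main case : S > 0, hence n > 0, t > 0
  have hDpos : 0 < C ^ (2 / ε) := Real.rpow_pos_of_pos hCpos _
  have hnpos : (0:ℝ) < (n:ℝ) := lt_of_lt_of_le (by positivity) hn
  have htpos : 0 < t := Real.sqrt_pos.mpr (by positivity)
  -- ENNReal setup
  set p : ℝ := (2 + ε) / 2 with hp
  set q : ℝ := (2 + ε) / ε with hq
  have hpq : p.HolderConjugate q := by
    rw [Real.holderConjugate_iff]
    constructor
    · rw [hp]; rw [lt_div_iff₀ (by norm_num : (0:ℝ) < 2)]; linarith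
    · rw [hp, hq]
      field_simp
  -- lintegral identities
  have hofK : ∫⁻ ω, ENNReal.ofReal ((ρ ω * σ ω) ^ (2 + ε)) ∂μ = ENNReal.ofReal K :=
    (ofReal_integral_eq_lintegral_ofReal hmom (ae_of_all _ hXpow_nn)).symm
  have hofM : ∫⁻ ω, ENNReal.ofReal ((ρ ω * σ ω) ^ 2) ∂μ = ENNReal.ofReal M :=
    (ofReal_integral_eq_lintegral_ofReal hX2i (ae_of_all _ fun ω => sq_nonneg _)).symm
  have hofS : ∫⁻ ω, ENNReal.ofReal (σ ω ^ 2 / Rmax ω ^ 2) ∂μ = ENNReal.ofReal S :=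
    (ofReal_integral_eq_lintegral_ofReal hrat
      (ae_of_all _ fun ω => div_nonneg (sq_nonneg _) (sq_nonneg _))).symm
  have hofL : ENNReal.ofReal L
      = ∫⁻ ω, ENNReal.ofReal ((ρ ω * σ ω) ^ 2) * A.indicator (fun _ => (1:ℝ≥0∞)) ω ∂μ := by
    rw [hL, ofReal_integral_eq_lintegral_ofReal hIndi (ae_of_all _ hIndnn)]
    refine lintegral_congr fun ω => ?_
    by_cases h : ω ∈ A <;> simp [Set.indicator_apply, h]
  -- Hölder
  have hHolder : ENNReal.ofReal L
      ≤ ENNReal.ofReal K ^ (1 / p) * (μ A) ^ (1 / q) := by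
    rw [hofL]
    calc ∫⁻ ω, ENNReal.ofReal ((ρ ω * σ ω) ^ 2) * A.indicator (fun _ => (1:ℝ≥0∞)) ω ∂μ
        ≤ (∫⁻ ω, ENNReal.ofReal ((ρ ω * σ ω) ^ 2) ^ p ∂μ) ^ (1 / p)
          * (∫⁻ ω, A.indicator (fun _ => (1:ℝ≥0∞)) ω ^ q ∂μ) ^ (1 / q) :=
          ENNReal.lintegral_mul_le_Lp_mul_Lq μ hpq
            (hX2m.ennreal_ofReal).aemeasurable
            ((measurable_const.indicator hAm)).aemeasurable
      _ = ENNReal.ofReal K ^ (1 / p) * (μ A) ^ (1 / q) := by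
          congr 1
          · congr 1
            rw [← hofK]
            refine lintegral_congr fun ω => ?_
            rw [ENNReal.ofReal_rpow_of_nonneg (sq_nonneg _) hpq.nonneg]
            congr 1
            rw [← Real.rpow_two (ρ ω * σ ω), ← Real.rpow_mul (hXnn ω)]
            congr 1
            rw [hp]; field_simp
          · congr 1
            rw [← lintegral_indicator_one hAm]
            refine lintegral_congr fun ω => ?_
            by_cases h : ω ∈ A <;>
              simp [Set.indicator_apply, h, ENNReal.zero_rpow_of_pos hpq.symm.pos]
  -- Markov + Cauchy-Schwarz
  have hMarkov : ENNReal.ofReal t * μ A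
      ≤ ENNReal.ofReal M ^ (1 / 2 : ℝ) * ENNReal.ofReal S ^ (1 / 2 : ℝ) := by
    have hsub : A ⊆ {ω | ENNReal.ofReal t ≤ ENNReal.ofReal (ρ ω * σ ω * (σ ω / Rmax ω))} := by
      intro ω hω
      simp only [hA, Set.mem_setOf_eq] at hω ⊢
      have hσp : 0 < σ ω := by
        by_contra hc
        push_neg at hc
        have hσ0 : σ ω = 0 := le_antisymm hc (hσnn ω)
        rw [hσ0] at hω
        have h2 : 0 ≤ Rmax ω * t := mul_nonneg (hRnn ω) htpos.le
        nlinarith [hω, h2]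
      have hRp := hRσ ω hσp
      have hlt : t < ρ ω * σ ω * (σ ω / Rmax ω) := by
        have he : ρ ω * σ ω * (σ ω / Rmax ω) = ρ ω * σ ω ^ 2 / Rmax ω := by
          field_simp
        rw [he, lt_div_iff₀ hRp, mul_comm t (Rmax ω)]
        exact hω
      exact ENNReal.ofReal_le_ofReal hlt.le
    calc ENNReal.ofReal t * μ A
        ≤ ENNReal.ofReal t
          * μ {ω | ENNReal.ofReal t ≤ ENNReal.ofReal (ρ ω * σ ω * (σ ω / Rmax ω))} :=
          mul_le_mul_right (measure_mono hsub) _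
      _ ≤ ∫⁻ ω, ENNReal.ofReal (ρ ω * σ ω * (σ ω / Rmax ω)) ∂μ :=
          mul_meas_ge_le_lintegral₀
            ((hXm.mul (hσm.div hRm)).ennreal_ofReal).aemeasurable _
      _ ≤ ENNReal.ofReal M ^ (1 / 2 : ℝ) * ENNReal.ofReal S ^ (1 / 2 : ℝ) := by
          have h22 : (2:ℝ).HolderConjugate 2 := Real.holderConjugate_iff.mpr ⟨one_lt_two, by norm_num⟩
          have := ENNReal.lintegral_mul_le_Lp_mul_Lq μ h22
            (f := fun ω => ENNReal.ofReal (ρ ω * σ ω))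
            (g := fun ω => ENNReal.ofReal (σ ω / Rmax ω))
            (hXm.ennreal_ofReal).aemeasurable ((hσm.div hRm).ennreal_ofReal).aemeasurable
          have heq1 : ∫⁻ ω, ENNReal.ofReal (ρ ω * σ ω * (σ ω / Rmax ω)) ∂μ
              = ∫⁻ ω, ((fun ω => ENNReal.ofReal (ρ ω * σ ω))
                * fun ω => ENNReal.ofReal (σ ω / Rmax ω)) ω ∂μ := by
            refine lintegral_congr fun ω => ?_
            simp only [Pi.mul_apply]
            rw [← ENNReal.ofReal_mul (hXnn ω)]
          have heq2 : (∫⁻ ω, ENNReal.ofReal (ρ ω * σ ω) ^ (2:ℝ) ∂μ) = ENNReal.ofReal M := by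
            rw [← hofM]
            refine lintegral_congr fun ω => ?_
            rw [ENNReal.ofReal_rpow_of_nonneg (hXnn ω) (by norm_num), Real.rpow_two]
          have heq3 : (∫⁻ ω, ENNReal.ofReal (σ ω / Rmax ω) ^ (2:ℝ) ∂μ) = ENNReal.ofReal S := by
            rw [← hofS]
            refine lintegral_congr fun ω => ?_
            rw [ENNReal.ofReal_rpow_of_nonneg (div_nonneg (hσnn ω) (hRnn ω)) (by norm_num),
              Real.rpow_two, div_pow]
          rw [heq1]
          rw [heq2, heq3] at this
          exact this
  -- convert to real inequalities
  have hμA_ne : μ A ≠ ⊤ := measure_ne_top μ A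
  set a : ℝ := (μ A).toReal with ha
  have hann : 0 ≤ a := ENNReal.toReal_nonneg
  have hMarkovR : t * a ≤ M ^ (1/2:ℝ) * S ^ (1/2:ℝ) := by
    have hfin : ENNReal.ofReal M ^ (1 / 2 : ℝ) * ENNReal.ofReal S ^ (1 / 2 : ℝ) ≠ ⊤ :=
      ENNReal.mul_ne_top (ENNReal.rpow_ne_top_of_nonneg (by norm_num) ENNReal.ofReal_ne_top)
        (ENNReal.rpow_ne_top_of_nonneg (by norm_num) ENNReal.ofReal_ne_top)
    have := ENNReal.toReal_mono hfin hMarkov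
    rwa [ENNReal.toReal_mul, ENNReal.toReal_ofReal htpos.le, ENNReal.toReal_mul,
      ← ENNReal.toReal_rpow, ← ENNReal.toReal_rpow,
      ENNReal.toReal_ofReal hpos.le, ENNReal.toReal_ofReal hSnn] at this
  have hHolderR : L ≤ K ^ (1/p) * a ^ (1/q) := by
    have hfin : ENNReal.ofReal K ^ (1 / p) * (μ A) ^ (1 / q) ≠ ⊤ :=
      ENNReal.mul_ne_top (ENNReal.rpow_ne_top_of_nonneg hpq.one_div_nonneg ENNReal.ofReal_ne_top)
        (ENNReal.rpow_ne_top_of_nonneg hpq.symm.one_div_nonneg hμA_ne)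
    have := ENNReal.toReal_mono hfin hHolder
    rwa [ENNReal.toReal_ofReal hLnn, ENNReal.toReal_mul, ← ENNReal.toReal_rpow,
      ← ENNReal.toReal_rpow, ENNReal.toReal_ofReal hKnn] at this
  -- bound a
  have hεne : ε ≠ 0 := hε.ne'
  have h2εne : (2 + ε) ≠ 0 := h2ε.ne'
  have haB : a ≤ C ^ (-(1/ε)) := by
    have h2 : M * S * C ^ (2/ε) ≤ (n:ℝ) * M / 2 := by
      nlinarith [mul_le_mul_of_nonneg_right hn hpos.le]
    have h1 : M * S ≤ (n:ℝ) * M / 2 * C ^ (-(2/ε)) := by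
      have hD1 : C ^ (2/ε) * C ^ (-(2/ε)) = 1 := by
        rw [← Real.rpow_add hCpos]; norm_num
      calc M * S = M * S * (C ^ (2/ε) * C ^ (-(2/ε))) := by rw [hD1, mul_one]
        _ = (M * S * C ^ (2/ε)) * C ^ (-(2/ε)) := by ring
        _ ≤ (n:ℝ) * M / 2 * C ^ (-(2/ε)) :=
            mul_le_mul_of_nonneg_right h2 (Real.rpow_nonneg hCpos.le _)
    have h3 : M ^ (1/2:ℝ) * S ^ (1/2:ℝ) ≤ t * C ^ (-(1/ε)) := by
      have e1 : M ^ (1/2:ℝ) * S ^ (1/2:ℝ) = (M * S) ^ (1/2:ℝ) :=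
        (Real.mul_rpow hpos.le hSpos.le).symm
      have e2 : t * C ^ (-(1/ε)) = ((n:ℝ) * M / 2 * C ^ (-(2/ε))) ^ (1/2:ℝ) := by
        rw [Real.mul_rpow (by positivity) (Real.rpow_nonneg hCpos.le _), ht,
          Real.sqrt_eq_rpow]
        congr 1
        rw [← Real.rpow_mul hCpos.le]
        congr 1
        ring
      rw [e1, e2]
      exact Real.rpow_le_rpow (by positivity) h1 (by norm_num)
    have h4 : t * a ≤ t * C ^ (-(1/ε)) := hMarkovR.trans h3
    exact le_of_mul_le_mul_left h4 htpos
  -- final computation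
  have hKp : 0 ≤ K ^ (1/p) := Real.rpow_nonneg hKnn _
  have hfinal : K ^ (1/p) * a ^ (1/q) ≤ (1/2) * M := by
    have h1 : a ^ (1/q) ≤ C ^ (-(1/(2+ε))) := by
      calc a ^ (1/q) ≤ (C ^ (-(1/ε))) ^ (1/q) :=
            Real.rpow_le_rpow hann haB hpq.symm.one_div_nonneg
        _ = C ^ (-(1/(2+ε))) := by
            rw [← Real.rpow_mul hCpos.le]
            congr 1
            rw [hq]
            field_simp
    have heq : K ^ (1/p) * C ^ (-(1/(2+ε))) = (1/2) * M := by
      have hL0 : 0 ≤ K ^ (1/p) * C ^ (-(1/(2+ε))) :=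
        mul_nonneg hKp (Real.rpow_nonneg hCpos.le _)
      have hR0 : 0 ≤ (1/2:ℝ) * M := by positivity
      refine Real.rpow_left_injOn h2εne hL0 hR0 ?_
      simp only
      have e1 : (K ^ (1/p) * C ^ (-(1/(2+ε)))) ^ (2+ε)
          = K ^ ((1/p)*(2+ε)) * C ^ ((-(1/(2+ε)))*(2+ε)) := by
        rw [Real.mul_rpow hKp (Real.rpow_nonneg hCpos.le _), ← Real.rpow_mul hKnn,
          ← Real.rpow_mul hCpos.le]
      have e2 : (1/p)*(2+ε) = 2 := by rw [hp]; field_simp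
      have e3 : (-(1/(2+ε)))*(2+ε) = -1 := by field_simp
      rw [e1, e2, e3, Real.rpow_two, Real.rpow_neg_one,
        Real.mul_rpow (by norm_num : (0:ℝ) ≤ 1/2) hpos.le, one_div,
        Real.inv_rpow (by norm_num : (0:ℝ) ≤ 2), hC]
      have hKne : K ≠ 0 := hKpos.ne'
      have hMne : M ^ (2+ε) ≠ 0 := (Real.rpow_pos_of_pos hpos _).ne'
      have h2ne : (2:ℝ) ^ (2+ε) ≠ 0 := (Real.rpow_pos_of_pos two_pos _).ne'
      field_simp
    calc K ^ (1/p) * a ^ (1/q) ≤ K ^ (1/p) * C ^ (-(1/(2+ε))) :=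
          mul_le_mul_of_nonneg_left h1 hKp
      _ = (1/2) * M := heq
  exact hHolderR.trans hfinal
end

section
/- (Feasible perturbation for the noise-based lower bound.) Let ρ, σ, Rmax be nonnegative measurable functions on a probability space with 0 < E[ρ²σ²] < ∞, let n ≥ 1, set α = √( 2·E[ρ²σ²]/n ) and Δ = min{ α·σ²·ρ / E[ρ²σ²], Rmax } (pointwise). Then: (1) 0 ≤ Δ ≤ Rmax pointwise; (2) E[ Δ²/(2σ²) ] ≤ 1/n (with the convention 0/0 = 0 when σ = 0); (3) E[ρ·Δ] ≥ α·( 1 − E[ ρ²σ² · 1( ρσ² > Rmax·E[ρ²σ²]/α ) ] / E[ρ²σ²] ). -/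
open MeasureTheory Real
open scoped ENNReal Classical

/-- Feasible perturbation for the noise-based lower bound. -/
theorem feasible_perturbation_noise
    {Ω : Type*} [MeasurableSpace Ω] (μ : Measure Ω) [IsProbabilityMeasure μ]
    (ρ σ Rmax : Ω → ℝ) (hρm : Measurable ρ) (hσm : Measurable σ) (hRm : Measurable Rmax)
    (hρnn : ∀ ω, 0 ≤ ρ ω) (hσnn : ∀ ω, 0 ≤ σ ω) (hRnn : ∀ ω, 0 ≤ Rmax ω)
    (V : ℝ) (hV : V = ∫ ω, ρ ω ^ 2 * σ ω ^ 2 ∂μ) (hVpos : 0 < V)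
    (hVfin : Integrable (fun ω => ρ ω ^ 2 * σ ω ^ 2) μ)
    (n : ℕ) (hn : 1 ≤ n)
    (α : ℝ) (hα : α = Real.sqrt (2 * V / n))
    (Δ : Ω → ℝ) (hΔ : ∀ ω, Δ ω = min (α * σ ω ^ 2 * ρ ω / V) (Rmax ω)) :
    (∀ ω, 0 ≤ Δ ω ∧ Δ ω ≤ Rmax ω)
    ∧ (∫ ω, Δ ω ^ 2 / (2 * σ ω ^ 2) ∂μ) ≤ 1 / (n : ℝ)
    ∧ α * (1 - (∫ ω, (if Rmax ω * V / α < ρ ω * σ ω ^ 2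
          then ρ ω ^ 2 * σ ω ^ 2 else 0) ∂μ) / V)
        ≤ ∫ ω, ρ ω * Δ ω ∂μ := by
  have hnpos : (0:ℝ) < n := by exact_mod_cast hn
  have hαpos : 0 < α := by
    rw [hα]; exact Real.sqrt_pos.mpr (by positivity)
  have hα2 : α ^ 2 = 2 * V / n := by
    rw [hα, sq_sqrt (by positivity)]
  have hΔnn : ∀ ω, 0 ≤ Δ ω := fun ω => by
    rw [hΔ]
    exact le_min (div_nonneg (mul_nonneg (mul_nonneg hαpos.le (sq_nonneg _)) (hρnn ω))
      hVpos.le) (hRnn ω)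
  have hΔle1 : ∀ ω, Δ ω ≤ α * σ ω ^ 2 * ρ ω / V := fun ω => by
    rw [hΔ]; exact min_le_left _ _
  have hΔm : Measurable Δ := by
    have : Δ = fun ω => min (α * σ ω ^ 2 * ρ ω / V) (Rmax ω) := funext hΔ
    rw [this]
    exact (((measurable_const.mul (hσm.pow_const 2)).mul hρm).div_const V).min hRm
  refine ⟨fun ω => ⟨hΔnn ω, by rw [hΔ]; exact min_le_right _ _⟩, ?_, ?_⟩
  · -- part 2
    have hg : Integrable (fun ω => α^2/(2*V^2) * (ρ ω ^ 2 * σ ω ^ 2)) μ :=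
      hVfin.const_mul _
    have hgnn : ∀ ω, 0 ≤ α^2/(2*V^2) * (ρ ω ^ 2 * σ ω ^ 2) := fun ω => by positivity
    have hle : ∀ ω, Δ ω ^ 2 / (2 * σ ω ^ 2) ≤ α^2/(2*V^2) * (ρ ω ^ 2 * σ ω ^ 2) := by
      intro ω
      rcases eq_or_lt_of_le (hσnn ω) with h0 | hpos
      · rw [← h0]; simp
      · rw [div_le_iff₀ (by positivity)]
        calc Δ ω ^ 2 ≤ (α * σ ω ^ 2 * ρ ω / V) ^ 2 :=
              pow_le_pow_left₀ (hΔnn ω) (hΔle1 ω) 2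
          _ = α^2/(2*V^2) * (ρ ω ^ 2 * σ ω ^ 2) * (2 * σ ω ^ 2) := by
              field_simp
    have hfnn : ∀ ω, 0 ≤ Δ ω ^ 2 / (2 * σ ω ^ 2) := fun ω => by positivity
    have hfm : Measurable fun ω => Δ ω ^ 2 / (2 * σ ω ^ 2) :=
      (hΔm.pow_const 2).div (measurable_const.mul (hσm.pow_const 2))
    have hf : Integrable (fun ω => Δ ω ^ 2 / (2 * σ ω ^ 2)) μ := by
      refine hg.mono hfm.aestronglyMeasurable (ae_of_all _ fun ω => ?_)
      rw [Real.norm_eq_abs, Real.norm_eq_abs, abs_of_nonneg (hfnn ω),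
        abs_of_nonneg (hgnn ω)]
      exact hle ω
    calc (∫ ω, Δ ω ^ 2 / (2 * σ ω ^ 2) ∂μ)
        ≤ ∫ ω, α^2/(2*V^2) * (ρ ω ^ 2 * σ ω ^ 2) ∂μ :=
          integral_mono hf hg hle
      _ = α^2/(2*V^2) * V := by rw [integral_const_mul, ← hV]
      _ = 1 / n := by rw [hα2]; field_simp
  · -- part 3
    set g : Ω → ℝ := fun ω => if Rmax ω * V / α < ρ ω * σ ω ^ 2
        then ρ ω ^ 2 * σ ω ^ 2 else 0 with hgdef
    have hgm : Measurable g := by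
      apply Measurable.ite _ ((hρm.pow_const 2).mul (hσm.pow_const 2)) measurable_const
      exact measurableSet_lt ((hRm.mul measurable_const).div_const α)
        (hρm.mul (hσm.pow_const 2))
    have hgint : Integrable g μ := by
      refine hVfin.mono hgm.aestronglyMeasurable (ae_of_all _ fun ω => ?_)
      simp only [Real.norm_eq_abs]
      rw [abs_of_nonneg (by positivity), abs_of_nonneg]
      · rw [hgdef]; dsimp only; split_ifs
        exacts [le_rfl, by positivity]
      · positivity
    have key : ∀ ω, α/V * (ρ ω ^ 2 * σ ω ^ 2 - g ω) ≤ ρ ω * Δ ω := by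
      intro ω
      simp only [hgdef]
      split_ifs with h
      · simp
        exact mul_nonneg (hρnn ω) (hΔnn ω)
      · push_neg at h
        rw [le_div_iff₀ hαpos] at h
        have hmin : α * σ ω ^ 2 * ρ ω / V ≤ Rmax ω := by
          rw [div_le_iff₀ hVpos]; nlinarith
        rw [hΔ ω, min_eq_left hmin]
        apply le_of_eq
        field_simp; ring
    have hfint : Integrable (fun ω => ρ ω * Δ ω) μ := by
      have hb : Integrable (fun ω => α/V * (ρ ω ^ 2 * σ ω ^ 2)) μ := hVfin.const_mul _
      refine hb.mono ((hρm.mul hΔm)).aestronglyMeasurable (ae_of_all _ fun ω => ?_)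
      rw [Real.norm_eq_abs, Real.norm_eq_abs,
        abs_of_nonneg (mul_nonneg (hρnn ω) (hΔnn ω)),
        abs_of_nonneg (mul_nonneg (div_nonneg hαpos.le hVpos.le) (by positivity))]
      calc ρ ω * Δ ω ≤ ρ ω * (α * σ ω ^ 2 * ρ ω / V) :=
            mul_le_mul_of_nonneg_left (hΔle1 ω) (hρnn ω)
        _ = α/V * (ρ ω ^ 2 * σ ω ^ 2) := by field_simp
    have h1 : ∫ ω, α/V * (ρ ω ^ 2 * σ ω ^ 2 - g ω) ∂μ ≤ ∫ ω, ρ ω * Δ ω ∂μ :=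
      integral_mono ((hVfin.sub hgint).const_mul _) hfint key
    have h2 : ∫ ω, α/V * (ρ ω ^ 2 * σ ω ^ 2 - g ω) ∂μ = α/V * (V - ∫ ω, g ω ∂μ) := by
      rw [integral_const_mul, integral_sub hVfin hgint, ← hV]
    calc α * (1 - (∫ ω, g ω ∂μ)/V) = α/V * (V - ∫ ω, g ω ∂μ) := by
          field_simp
      _ = ∫ ω, α/V * (ρ ω ^ 2 * σ ω ^ 2 - g ω) ∂μ := h2.symm
      _ ≤ _ := h1
end

section
/- (Feasible perturbation for the context-richness lower bound.) Let ρ, R be nonnegative measurable functions and ξ a {0,1}-valued measurable function on a probability space with 0 < E[ξ·ρ²·R²] < ∞, let n ≥ 1, set α = √( 4·E[ξ·ρ²·R²]/n ) and Δ = min{ ξ·ρ·R·α / E[ξ·ρ²·R²], 1/2 } (pointwise). Then: (1) 0 ≤ Δ ≤ 1/2 pointwise; (2) (1/4)·E[ξ·Δ²] ≤ 1/n; (3) E[ξ·ρ·Δ·R] ≥ α·( 1 − E[ ξ·ρ²·R² · 1( ξ·ρ·R > E[ξ·ρ²·R²]/(2α) ) ] / E[ξ·ρ²·R²] ). -/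
open MeasureTheory Real
open scoped ENNReal Classical

/-- Feasible perturbation for the context-richness lower bound. -/
theorem feasible_perturbation_context
    {Ω : Type*} [MeasurableSpace Ω] (μ : Measure Ω) [IsProbabilityMeasure μ]
    (ρ R ξ : Ω → ℝ) (hρm : Measurable ρ) (hRm : Measurable R) (hξm : Measurable ξ)
    (hρnn : ∀ ω, 0 ≤ ρ ω) (hRnn : ∀ ω, 0 ≤ R ω)
    (hξ01 : ∀ ω, ξ ω = 0 ∨ ξ ω = 1)
    (V : ℝ) (hV : V = ∫ ω, ξ ω * ρ ω ^ 2 * R ω ^ 2 ∂μ) (hVpos : 0 < V)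
    (hVfin : Integrable (fun ω => ξ ω * ρ ω ^ 2 * R ω ^ 2) μ)
    (n : ℕ) (hn : 1 ≤ n)
    (α : ℝ) (hα : α = Real.sqrt (4 * V / n))
    (Δ : Ω → ℝ) (hΔ : ∀ ω, Δ ω = min (ξ ω * ρ ω * R ω * α / V) (1 / 2)) :
    (∀ ω, 0 ≤ Δ ω ∧ Δ ω ≤ 1 / 2)
    ∧ (1 / 4) * (∫ ω, ξ ω * Δ ω ^ 2 ∂μ) ≤ 1 / (n : ℝ)
    ∧ α * (1 - (∫ ω, (if V / (2 * α) < ξ ω * ρ ω * R ω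
          then ξ ω * ρ ω ^ 2 * R ω ^ 2 else 0) ∂μ) / V)
        ≤ ∫ ω, ξ ω * ρ ω * Δ ω * R ω ∂μ := by
  have hn' : (0:ℝ) < n := by exact_mod_cast hn
  have hαpos : 0 < α := by
    rw [hα]; exact Real.sqrt_pos.2 (by positivity)
  have hα2 : α ^ 2 = 4 * V / n := by
    rw [hα, sq_sqrt (by positivity)]
  have hξle : ∀ ω, 0 ≤ ξ ω ∧ ξ ω ≤ 1 := by
    intro ω; rcases hξ01 ω with h | h <;> simp [h]
  have hxnn : ∀ ω, 0 ≤ ξ ω * ρ ω * R ω * α / V := by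
    intro ω
    have := (hξle ω).1; have := hρnn ω; have := hRnn ω
    positivity
  have hΔnn : ∀ ω, 0 ≤ Δ ω := by
    intro ω; rw [hΔ ω]; exact le_min (hxnn ω) (by norm_num)
  have hΔle : ∀ ω, Δ ω ≤ 1 / 2 := by
    intro ω; rw [hΔ ω]; exact min_le_right _ _
  have hΔeq : Δ = fun ω => min (ξ ω * ρ ω * R ω * α / V) (1 / 2) := funext hΔ
  have hΔm : Measurable Δ := by
    rw [hΔeq]; fun_prop
  refine ⟨fun ω => ⟨hΔnn ω, hΔle ω⟩, ?_, ?_⟩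
  · -- part 2
    have hInt1 : Integrable (fun ω => ξ ω * Δ ω ^ 2) μ := by
      apply Integrable.mono' (integrable_const (1/4 : ℝ))
      · exact ((hξm.mul (hΔm.pow_const 2))).aestronglyMeasurable
      · refine Filter.Eventually.of_forall fun ω => ?_
        have h1 := (hξle ω).1; have h2 := (hξle ω).2
        have h3 := hΔnn ω; have h4 := hΔle ω
        rw [Real.norm_eq_abs, abs_of_nonneg (by positivity)]
        nlinarith
    have h2 : ∫ ω, ξ ω * Δ ω ^ 2 ∂μ
        ≤ ∫ ω, (α ^ 2 / V ^ 2) * (ξ ω * ρ ω ^ 2 * R ω ^ 2) ∂μ := by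
      apply integral_mono hInt1 (hVfin.const_mul _)
      intro ω
      rcases hξ01 ω with h | h
      · simp [h]
      · have hx : Δ ω ≤ ρ ω * R ω * α / V := by
          rw [hΔ ω, h]; simpa using min_le_left _ _
        have h3 := hΔnn ω
        have hΔsq : Δ ω ^ 2 ≤ (ρ ω * R ω * α / V) ^ 2 := by
          exact pow_le_pow_left₀ h3 hx 2
        simp only [h, one_mul]
        calc Δ ω ^ 2 ≤ (ρ ω * R ω * α / V) ^ 2 := hΔsq
          _ = α ^ 2 / V ^ 2 * (ρ ω ^ 2 * R ω ^ 2) := by ring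
    rw [integral_const_mul, ← hV] at h2
    have hval : α ^ 2 / V ^ 2 * V = 4 / n := by
      rw [hα2]; field_simp
    rw [hval] at h2
    have h4 : (4:ℝ)/n = 4*(1/n) := by ring
    linarith
  · -- part 3
    set f : Ω → ℝ := fun ω => ξ ω * ρ ω ^ 2 * R ω ^ 2 with hf
    set g : Ω → ℝ := fun ω => if V / (2 * α) < ξ ω * ρ ω * R ω then f ω else 0 with hg
    have hfnn : ∀ ω, 0 ≤ f ω := by
      intro ω; have := (hξle ω).1; have := hρnn ω; have := hRnn ω; positivity
    have hgm : Measurable g := by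
      apply Measurable.ite _ (by fun_prop) measurable_const
      exact measurableSet_lt measurable_const (by fun_prop)
    have hgInt : Integrable g μ := by
      apply hVfin.mono hgm.aestronglyMeasurable
      refine Filter.Eventually.of_forall fun ω => ?_
      rw [hg]
      by_cases h : V / (2 * α) < ξ ω * ρ ω * R ω <;>
        simp [h, abs_of_nonneg (hfnn ω), hfnn ω]
    have hkey : ∀ ω, α / V * (f ω - g ω) ≤ ξ ω * ρ ω * Δ ω * R ω := by
      intro ω
      rcases hξ01 ω with h | h
      · simp [hg, hf, h]
      · by_cases hc : V / (2 * α) < ξ ω * ρ ω * R ω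
        · have := hρnn ω; have := hRnn ω; have := hΔnn ω
          simp only [hg, hf, if_pos hc, h, sub_self, mul_zero]
          positivity
        · have hc' : ρ ω * R ω ≤ V / (2 * α) := by
            have := not_lt.1 hc; rw [h, one_mul] at this; exact this
          have hc2 : ρ ω * R ω * (2 * α) ≤ V :=
            (le_div_iff₀ (by positivity)).1 hc'
          have hle : ρ ω * R ω * α / V ≤ 1 / 2 := by
            rw [div_le_div_iff₀ hVpos (by norm_num : (0:ℝ) < 2)]
            nlinarith
          have hΔω : Δ ω = ρ ω * R ω * α / V := by
            rw [hΔ ω, h, one_mul, min_eq_left hle]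
          simp only [hg, hf, if_neg hc, h, hΔω]
          apply le_of_eq
          field_simp
          ring
    have hLInt : Integrable (fun ω => α / V * (f ω - g ω)) μ :=
      ((hVfin.sub hgInt).const_mul _)
    have hRInt : Integrable (fun ω => ξ ω * ρ ω * Δ ω * R ω) μ := by
      apply Integrable.mono' (hVfin.const_mul (α / V))
      · exact (((hξm.mul hρm).mul hΔm).mul hRm).aestronglyMeasurable
      · refine Filter.Eventually.of_forall fun ω => ?_
        rcases hξ01 ω with h | h
        · simp [hf, h]
        · have hx : Δ ω ≤ ρ ω * R ω * α / V := by
            rw [hΔ ω, h]; simpa using min_le_left _ _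
          have hρ := hρnn ω; have hR := hRnn ω; have hΔ' := hΔnn ω
          have hx' : Δ ω * V ≤ ρ ω * R ω * α := (le_div_iff₀ hVpos).1 hx
          rw [Real.norm_eq_abs, abs_of_nonneg (by rw [h]; positivity)]
          simp only [h, hf, one_mul]
          rw [div_mul_eq_mul_div, le_div_iff₀ hVpos]
          nlinarith [mul_le_mul_of_nonneg_left hx' (mul_nonneg hρ hR)]
    have hmono := integral_mono hLInt hRInt hkey
    rw [integral_const_mul, integral_sub hVfin hgInt, ← hf, ← hV] at hmono
    calc α * (1 - (∫ ω, g ω ∂μ) / V) = α / V * (V - ∫ ω, g ω ∂μ) := by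
          field_simp
      _ ≤ _ := hmono
end

section
/- (KL divergence between joint distributions with Gaussian reward kernels.) Let ν be a probability measure on a measurable space Z, let σ : Z → (0,∞) and η₁, η₂ : Z → ℝ be measurable with ∫ (η₁(z) − η₂(z))²/(2σ(z)²) dν(z) < ∞. Let P_i (i = 1,2) be the probability measure on Z×ℝ obtained by drawing z ∼ ν and then r ∼ N(η_i(z), σ(z)²) (the real Gaussian with mean η_i(z) and variance σ(z)²). Then D_KL(P₁ ‖ P₂) = ∫ (η₁(z) − η₂(z))² / (2·σ(z)²) dν(z). -/
open MeasureTheory ProbabilityTheory Real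
open scoped ENNReal Classical
open MeasureTheory ProbabilityTheory Real
open scoped ENNReal NNReal

namespace KLGaussAux

lemma gaussianPDF_eq_coe (μ : ℝ) (v : ℝ≥0) :
    gaussianPDF μ v = fun x => ((gaussianPDFReal μ v x).toNNReal : ℝ≥0∞) := rfl

lemma integral_gaussianReal_eq {μ : ℝ} {v : ℝ≥0} (hv : v ≠ 0) (g : ℝ → ℝ) :
    ∫ x, g x ∂gaussianReal μ v = ∫ x, gaussianPDFReal μ v x * g x := by
  rw [gaussianReal_of_var_ne_zero _ hv, gaussianPDF_eq_coe,
    integral_withDensity_eq_integral_smul (measurable_gaussianPDFReal μ v).real_toNNReal g]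
  congr 1; funext x
  simp [NNReal.smul_def, Real.coe_toNNReal _ (gaussianPDFReal_nonneg μ v x)]

lemma integrable_gaussianReal_iff {μ : ℝ} {v : ℝ≥0} (hv : v ≠ 0) (g : ℝ → ℝ) :
    Integrable g (gaussianReal μ v) ↔ Integrable (fun x => gaussianPDFReal μ v x * g x) volume := by
  rw [gaussianReal_of_var_ne_zero _ hv, gaussianPDF_eq_coe,
    integrable_withDensity_iff_integrable_smul (measurable_gaussianPDFReal μ v).real_toNNReal]
  constructor <;> intro h <;> refine h.congr (Filter.Eventually.of_forall fun x => ?_) <;>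
    simp [NNReal.smul_def, Real.coe_toNNReal _ (gaussianPDFReal_nonneg μ v x)]

lemma pdf_mul_eq {v : ℝ≥0} (hv : v ≠ 0) (x : ℝ) :
    gaussianPDFReal 0 v x * x = (√(2 * π * v))⁻¹ * (x * rexp (-(2 * (v:ℝ))⁻¹ * x ^ 2)) := by
  have hvpos : (0:ℝ) < v := by positivity
  rw [gaussianPDFReal]
  rw [show -(x - 0) ^ 2 / (2 * (v:ℝ)) = -(2 * (v:ℝ))⁻¹ * x ^ 2 by field_simp; ring]
  ring

lemma integrable_pdf_mul {v : ℝ≥0} (hv : v ≠ 0) :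
    Integrable (fun x => gaussianPDFReal 0 v x * x) volume := by
  have hvpos : (0:ℝ) < v := by positivity
  have hb : (0:ℝ) < (2 * (v:ℝ))⁻¹ := by positivity
  have := (integrable_mul_exp_neg_mul_sq hb).const_mul (√(2 * π * v))⁻¹
  exact this.congr (Filter.Eventually.of_forall fun x => (pdf_mul_eq hv x).symm)

lemma integral_pdf_mul_eq_zero {v : ℝ≥0} (hv : v ≠ 0) :
    ∫ x, gaussianPDFReal 0 v x * x = 0 := by
  have h := integral_neg_eq_self (fun x => gaussianPDFReal 0 v x * x) volume
  have heq : ∀ x : ℝ, gaussianPDFReal 0 v (-x) * (-x) = -(gaussianPDFReal 0 v x * x) := by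
    intro x
    have : gaussianPDFReal 0 v (-x) = gaussianPDFReal 0 v x := by
      simp [gaussianPDFReal, neg_sq]
    rw [this]; ring
  simp_rw [heq, integral_neg] at h
  linarith

end KLGaussAux
open MeasureTheory ProbabilityTheory Real Set Filter
open scoped ENNReal NNReal Topology
namespace KLGaussAux
variable {μ : ℝ} {v : ℝ≥0}

lemma pdf_shift (μ : ℝ) (v : ℝ≥0) (x : ℝ) :
    gaussianPDFReal μ v x = gaussianPDFReal 0 v (x - μ) := by
  rw [gaussianPDFReal_sub, zero_add]

lemma integrable_pdf_mul_add (hv : v ≠ 0) (μ : ℝ) :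
    Integrable (fun y => gaussianPDFReal 0 v y * (y + μ)) volume := by
  have h1 := integrable_pdf_mul hv
  have h2 := (integrable_gaussianPDFReal 0 v).mul_const μ
  exact (h1.add h2).congr (Filter.Eventually.of_forall fun x => by
    simp only [Pi.add_apply]; ring)

lemma integrable_id_gaussianReal (μ : ℝ) (hv : v ≠ 0) :
    Integrable (fun x => x) (gaussianReal μ v) := by
  rw [integrable_gaussianReal_iff hv]
  have h0 : (fun x : ℝ => gaussianPDFReal μ v x * x)
      = fun x => (fun y => gaussianPDFReal 0 v y * (y + μ)) (x - μ) := by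
    funext x; rw [pdf_shift μ v x]; ring_nf
  rw [h0]
  exact (integrable_pdf_mul_add hv μ).comp_sub_right μ

lemma integral_id_gaussianReal (μ : ℝ) (hv : v ≠ 0) :
    ∫ x, x ∂gaussianReal μ v = μ := by
  rw [integral_gaussianReal_eq hv]
  have h0 : (fun x : ℝ => gaussianPDFReal μ v x * x)
      = fun x => (fun y => gaussianPDFReal 0 v y * (y + μ)) (x - μ) := by
    funext x; rw [pdf_shift μ v x]; ring_nf
  rw [h0, integral_sub_right_eq_self (fun y => gaussianPDFReal 0 v y * (y + μ)) μ]
  have h1 : ∀ y : ℝ, gaussianPDFReal 0 v y * (y + μ)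
      = gaussianPDFReal 0 v y * y + gaussianPDFReal 0 v y * μ := fun y => by ring
  simp_rw [h1]
  rw [integral_add (integrable_pdf_mul hv) ((integrable_gaussianPDFReal 0 v).mul_const μ),
    integral_pdf_mul_eq_zero hv, integral_mul_const, integral_gaussianPDFReal_eq_one 0 hv]
  ring

lemma integral_mul_exp_neg_mul_sq_Ioi {b : ℝ} (hb : 0 < b) :
    ∫ x in Ioi (0:ℝ), x * rexp (-b * x ^ 2) = (2 * b)⁻¹ := by
  have hderiv : ∀ x ∈ Ici (0:ℝ),
      HasDerivAt (fun y : ℝ => -(2 * b)⁻¹ * rexp (-b * y ^ 2)) (x * rexp (-b * x ^ 2)) x := by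
    intro x _
    have h1 : HasDerivAt (fun y : ℝ => -b * y ^ 2) (-b * (2 * x)) x := by
      simpa using ((hasDerivAt_pow 2 x).const_mul (-b))
    have h2 := (h1.exp).const_mul (-(2 * b)⁻¹)
    refine h2.congr_deriv ?_
    have hb0 : b ≠ 0 := hb.ne'
    field_simp
  have hint : IntegrableOn (fun x : ℝ => x * rexp (-b * x ^ 2)) (Ioi 0) :=
    (integrable_mul_exp_neg_mul_sq hb).integrableOn
  have htend : Tendsto (fun y : ℝ => -(2 * b)⁻¹ * rexp (-b * y ^ 2)) atTop (𝓝 0) := by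
    have h3 : Tendsto (fun y : ℝ => -b * y ^ 2) atTop atBot := by
      apply Tendsto.const_mul_atTop_of_neg (by linarith : -b < 0)
      exact tendsto_pow_atTop (by norm_num)
    have := (Real.tendsto_exp_atBot.comp h3).const_mul (-(2 * b)⁻¹)
    simpa using this
  have := integral_Ioi_of_hasDerivAt_of_tendsto' hderiv hint htend
  rw [this]
  simp [Real.exp_zero]

end KLGaussAux
namespace KLGaussAux
variable {μ : ℝ} {v : ℝ≥0}

lemma integrable_pdf_mul_abs (hv : v ≠ 0) :
    Integrable (fun y : ℝ => gaussianPDFReal 0 v y * |y|) volume :=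
  (integrable_pdf_mul hv).abs.congr (Filter.Eventually.of_forall fun x => by
    simp only []
    rw [abs_mul, abs_of_nonneg (gaussianPDFReal_nonneg 0 v x)])

lemma integral_pdf_mul_abs (hv : v ≠ 0) :
    ∫ y : ℝ, gaussianPDFReal 0 v y * |y| = (√(2 * π * v))⁻¹ * (2 * v) := by
  have hvpos : (0:ℝ) < v := by positivity
  set f : ℝ → ℝ := fun y => gaussianPDFReal 0 v y * |y| with hf
  have hfeven : ∀ x : ℝ, f (-x) = f x := by
    intro x; simp only [hf, abs_neg]
    congr 1
    simp [gaussianPDFReal, neg_sq]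
  have hint := integrable_pdf_mul_abs hv
  have hsplit := intervalIntegral.integral_Iic_add_Ioi (b := (0:ℝ))
    hint.integrableOn hint.integrableOn
  have hIic : ∫ x in Iic (0:ℝ), f x = ∫ x in Ioi (0:ℝ), f x := by
    have := integral_comp_neg_Ioi (0:ℝ) f
    simp only [neg_zero] at this
    rw [← this]
    exact setIntegral_congr_fun measurableSet_Ioi fun x _ => hfeven x
  have hIoi : ∫ x in Ioi (0:ℝ), f x = (√(2 * π * v))⁻¹ * v := by
    have h1 : ∫ x in Ioi (0:ℝ), f x
        = ∫ x in Ioi (0:ℝ), (√(2 * π * v))⁻¹ * (x * rexp (-(2 * (v:ℝ))⁻¹ * x ^ 2)) := by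
      refine setIntegral_congr_fun measurableSet_Ioi fun x hx => ?_
      rw [hf]; simp only
      rw [abs_of_pos (mem_Ioi.mp hx), pdf_mul_eq hv]
    rw [h1, integral_const_mul, integral_mul_exp_neg_mul_sq_Ioi (by positivity)]
    congr 1
    rw [mul_inv, inv_inv]
    ring
  rw [← hsplit, hIic, hIoi]
  ring

lemma integrable_abs_sub_gaussianReal (μ : ℝ) (hv : v ≠ 0) :
    Integrable (fun x => |x - μ|) (gaussianReal μ v) :=
  ((integrable_id_gaussianReal μ hv).sub (integrable_const μ)).abs

lemma integral_abs_sub_gaussianReal (μ : ℝ) (hv : v ≠ 0) :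
    ∫ x, |x - μ| ∂gaussianReal μ v = (√(2 * π * v))⁻¹ * (2 * v) := by
  rw [integral_gaussianReal_eq hv]
  have h0 : (fun x : ℝ => gaussianPDFReal μ v x * |x - μ|)
      = fun x => (fun y => gaussianPDFReal 0 v y * |y|) (x - μ) := by
    funext x; rw [pdf_shift μ v x]
  rw [h0, integral_sub_right_eq_self (fun y => gaussianPDFReal 0 v y * |y|) μ]
  exact integral_pdf_mul_abs hv

end KLGaussAux
namespace KLGaussAux

lemma measurable_pdfReal_comp {Z : Type*} [MeasurableSpace Z] {m : Z → ℝ} {w : Z → ℝ≥0}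
    (hm : Measurable m) (hw : Measurable w) :
    Measurable fun p : Z × ℝ => gaussianPDFReal (m p.1) (w p.1) p.2 := by
  simp only [gaussianPDFReal]
  have hwc : Measurable fun p : Z × ℝ => ((w p.1 : ℝ)) :=
    measurable_coe_nnreal_real.comp (hw.comp measurable_fst)
  have h1 : Measurable fun p : Z × ℝ => (√(2 * π * (w p.1 : ℝ)))⁻¹ :=
    (Real.continuous_sqrt.measurable.comp (hwc.const_mul (2 * π))).inv
  have h2 : Measurable fun p : Z × ℝ => rexp (-(p.2 - m p.1) ^ 2 / (2 * (w p.1 : ℝ))) :=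
    Real.measurable_exp.comp
      ((((measurable_snd.sub (hm.comp measurable_fst)).pow_const 2).neg).div
        (hwc.const_mul 2))
  exact h1.mul h2

lemma measurable_gaussianReal_comp {Z : Type*} [MeasurableSpace Z] {m : Z → ℝ} {w : Z → ℝ≥0}
    (hm : Measurable m) (hw : Measurable w) (hw0 : ∀ z, w z ≠ 0) :
    Measurable fun z => gaussianReal (m z) (w z) := by
  refine Measure.measurable_of_measurable_coe _ fun s hs => ?_
  simp_rw [gaussianReal_apply _ (hw0 _) s]
  have hmeas : Measurable fun p : Z × ℝ => gaussianPDF (m p.1) (w p.1) p.2 :=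
    (measurable_pdfReal_comp hm hw).ennreal_ofReal
  exact hmeas.lintegral_prod_right'

end KLGaussAux
/-- Kullback–Leibler divergence: `∫ log(dP/dQ) dP` when `P ≪ Q` and the log-density is
integrable, and `+∞` otherwise. -/
noncomputable def klDiv {α : Type*} [MeasurableSpace α] (P Q : Measure α) : EReal :=
  if P ≪ Q ∧ Integrable (fun x => Real.log (P.rnDeriv Q x).toReal) P
  then ((∫ x, Real.log (P.rnDeriv Q x).toReal ∂P : ℝ) : EReal)
  else ⊤

/-- The joint law of (z, r) with z ∼ ν and r ∼ N(η(z), σ(z)²). -/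
noncomputable def gaussianJoint {Z : Type*} [MeasurableSpace Z] (ν : Measure Z)
    (η σ : Z → ℝ) : Measure (Z × ℝ) :=
  ν.bind fun z => (gaussianReal (η z) ((σ z ^ 2).toNNReal)).map fun r => (z, r)

/-- KL divergence between joint distributions with Gaussian reward kernels. -/
theorem klDiv_gaussianJoint
    {Z : Type*} [MeasurableSpace Z] (ν : Measure Z) [IsProbabilityMeasure ν]
    (σ η₁ η₂ : Z → ℝ) (hσm : Measurable σ) (hσ : ∀ z, 0 < σ z)
    (hη₁ : Measurable η₁) (hη₂ : Measurable η₂)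
    (hint : Integrable (fun z => (η₁ z - η₂ z) ^ 2 / (2 * σ z ^ 2)) ν) :
    klDiv (gaussianJoint ν η₁ σ) (gaussianJoint ν η₂ σ)
      = ((∫ z, (η₁ z - η₂ z) ^ 2 / (2 * σ z ^ 2) ∂ν : ℝ) : EReal) := by
  classical
  set v : Z → ℝ≥0 := fun z => (σ z ^ 2).toNNReal with hvdef
  have hv0 : ∀ z, v z ≠ 0 := fun z =>
    ne_of_gt (Real.toNNReal_pos.mpr (pow_pos (hσ z) 2))
  have hvm : Measurable v := (hσm.pow_const 2).real_toNNReal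
  have hvr : ∀ z, ((v z : ℝ)) = σ z ^ 2 := fun z => Real.coe_toNNReal _ (sq_nonneg _)
  set κ₁ : Kernel Z ℝ := ⟨fun z => gaussianReal (η₁ z) (v z),
    KLGaussAux.measurable_gaussianReal_comp hη₁ hvm hv0⟩ with hκ₁def
  set κ₂ : Kernel Z ℝ := ⟨fun z => gaussianReal (η₂ z) (v z),
    KLGaussAux.measurable_gaussianReal_comp hη₂ hvm hv0⟩ with hκ₂def
  have hκ₁ : ∀ z, κ₁ z = gaussianReal (η₁ z) (v z) := fun z => rfl
  have hκ₂ : ∀ z, κ₂ z = gaussianReal (η₂ z) (v z) := fun z => rfl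
  haveI : IsMarkovKernel κ₁ := ⟨fun z => by rw [hκ₁]; infer_instance⟩
  haveI : IsMarkovKernel κ₂ := ⟨fun z => by rw [hκ₂]; infer_instance⟩
  -- the joint measures are compProds
  have hbind : ∀ (κ : Kernel Z ℝ), IsMarkovKernel κ →
      (ν.bind fun z => (κ z).map fun r => (z, r)) = ν ⊗ₘ κ := by
    intro κ hκ
    have hmf : Measurable fun z => (κ z).map fun r => (z, r) := by
      refine Measure.measurable_of_measurable_coe _ fun s hs => ?_
      simp_rw [Measure.map_apply measurable_prodMk_left hs]
      exact Kernel.measurable_kernel_prodMk_left hs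
    refine Measure.ext fun s hs => ?_
    rw [Measure.bind_apply hs hmf.aemeasurable, Measure.compProd_apply hs]
    refine lintegral_congr fun z => ?_
    rw [Measure.map_apply measurable_prodMk_left hs]
  have hJ1 : gaussianJoint ν η₁ σ = ν ⊗ₘ κ₁ := hbind κ₁ inferInstance
  have hJ2 : gaussianJoint ν η₂ σ = ν ⊗ₘ κ₂ := hbind κ₂ inferInstance
  rw [hJ1, hJ2]
  -- the density of the first joint w.r.t. the second
  set ρ : Z × ℝ → ℝ := fun p =>
    gaussianPDFReal (η₁ p.1) (v p.1) p.2 / gaussianPDFReal (η₂ p.1) (v p.1) p.2 with hρdef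
  have hρm : Measurable ρ :=
    (KLGaussAux.measurable_pdfReal_comp hη₁ hvm).div (KLGaussAux.measurable_pdfReal_comp hη₂ hvm)
  have hρpos : ∀ p, 0 < ρ p := fun p =>
    div_pos (gaussianPDFReal_pos _ _ _ (hv0 _)) (gaussianPDFReal_pos _ _ _ (hv0 _))
  set f : Z × ℝ → ℝ≥0∞ := fun p => ENNReal.ofReal (ρ p) with hfdef
  have hfm : Measurable f := hρm.ennreal_ofReal
  have key : ν ⊗ₘ κ₁ = (ν ⊗ₘ κ₂).withDensity f := by
    refine Measure.ext fun s hs => ?_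
    rw [withDensity_apply _ hs, ← lintegral_indicator hs _,
      Measure.lintegral_compProd (hfm.indicator hs), Measure.compProd_apply hs]
    refine lintegral_congr fun z => ?_
    rw [hκ₂ z, gaussianReal_of_var_ne_zero _ (hv0 z),
      lintegral_withDensity_eq_lintegral_mul _ (measurable_gaussianPDF _ _)
        (show Measurable fun b : ℝ => s.indicator f (z, b) from
          (hfm.indicator hs).comp measurable_prodMk_left),
      hκ₁ z, gaussianReal_apply _ (hv0 z), ← lintegral_indicator (measurable_prodMk_left hs) _]
    refine lintegral_congr fun r => ?_
    by_cases hr : (z, r) ∈ s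
    · have hmem : r ∈ Prod.mk z ⁻¹' s := hr
      simp only [Pi.mul_apply, Function.comp_apply, Set.indicator_of_mem hr,
        Set.indicator_of_mem hmem, hfdef, hρdef, gaussianPDF]
      rw [← ENNReal.ofReal_mul (gaussianPDFReal_nonneg _ _ _)]
      congr 1
      have h2ne := (gaussianPDFReal_pos (η₂ z) (v z) r (hv0 z)).ne'
      field_simp
    · have hmem : r ∉ Prod.mk z ⁻¹' s := hr
      simp [Set.indicator_of_notMem hr, Set.indicator_of_notMem hmem]
  have hac : (ν ⊗ₘ κ₁) ≪ (ν ⊗ₘ κ₂) := by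
    rw [key]; exact withDensity_absolutelyContinuous _ _
  have hrn : (ν ⊗ₘ κ₁).rnDeriv (ν ⊗ₘ κ₂) =ᵐ[ν ⊗ₘ κ₂] f := by
    have h := Measure.rnDeriv_withDensity (ν ⊗ₘ κ₂) hfm
    rwa [← key] at h
  have hrn₁ : (ν ⊗ₘ κ₁).rnDeriv (ν ⊗ₘ κ₂) =ᵐ[ν ⊗ₘ κ₁] f := hac.ae_le hrn
  set c : Z → ℝ := fun z => (η₁ z - η₂ z) / σ z ^ 2 with hcdef
  have hcm : Measurable c := (hη₁.sub hη₂).div (hσm.pow_const 2)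
  set w : Z → ℝ := fun z => (η₁ z - η₂ z) ^ 2 / (2 * σ z ^ 2) with hwdef
  have hwm : Measurable w := ((hη₁.sub hη₂).pow_const 2).div ((hσm.pow_const 2).const_mul 2)
  set g : Z × ℝ → ℝ := fun p => c p.1 * (p.2 - η₁ p.1) + w p.1 with hgdef
  have hlogρ : ∀ p, Real.log (ρ p) = g p := by
    rintro ⟨z, r⟩
    have hs2 : (0:ℝ) < σ z ^ 2 := pow_pos (hσ z) 2
    have hCpos : (0:ℝ) < (√(2 * π * (v z : ℝ)))⁻¹ := by
      refine inv_pos.mpr (Real.sqrt_pos.mpr ?_)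
      rw [hvr]
      positivity
    have h1 := gaussianPDFReal_pos (η₁ z) (v z) r (hv0 z)
    have h2 := gaussianPDFReal_pos (η₂ z) (v z) r (hv0 z)
    rw [hρdef, hgdef]
    simp only [hcdef, hwdef]
    rw [Real.log_div h1.ne' h2.ne']
    simp only [gaussianPDFReal]
    rw [Real.log_mul hCpos.ne' (Real.exp_ne_zero _),
      Real.log_mul hCpos.ne' (Real.exp_ne_zero _), Real.log_exp, Real.log_exp, hvr]
    have hsne : σ z ^ 2 ≠ 0 := hs2.ne'
    field_simp
    ring
  have hg2m : Measurable fun p : Z × ℝ => w p.1 := hwm.comp measurable_fst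
  have hg2int : Integrable (fun p : Z × ℝ => w p.1) (ν ⊗ₘ κ₁) := by
    rw [Measure.integrable_compProd_iff hg2m.aestronglyMeasurable]
    refine ⟨Filter.Eventually.of_forall fun z =>
      show Integrable (fun _ : ℝ => w z) (κ₁ z) from integrable_const _, ?_⟩
    have hcw : ∀ z, ∫ r, ‖w z‖ ∂κ₁ z = ‖w z‖ := fun z => by
      rw [hκ₁ z, integral_const, probReal_univ]
      simp
    exact hint.norm.congr (Filter.Eventually.of_forall fun z => (hcw z).symm)
  have hg1m : Measurable fun p : Z × ℝ => c p.1 * (p.2 - η₁ p.1) :=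
    (hcm.comp measurable_fst).mul (measurable_snd.sub (hη₁.comp measurable_fst))
  have hnorm : ∀ z, ∫ r, ‖c z * (r - η₁ z)‖ ∂κ₁ z
      = |c z| * ((√(2 * π * σ z ^ 2))⁻¹ * (2 * σ z ^ 2)) := by
    intro z
    simp_rw [norm_mul, Real.norm_eq_abs]
    rw [integral_const_mul, hκ₁ z, KLGaussAux.integral_abs_sub_gaussianReal _ (hv0 z), hvr]
  have hφint : Integrable (fun z => |c z| * ((√(2 * π * σ z ^ 2))⁻¹ * (2 * σ z ^ 2))) ν := by
    refine Integrable.mono' (hint.add (integrable_const (1/2 : ℝ)))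
      ((hcm.abs.mul (((Real.continuous_sqrt.measurable.comp
        ((hσm.pow_const 2).const_mul (2 * π))).inv).mul
        ((hσm.pow_const 2).const_mul 2))).aestronglyMeasurable)
      (Filter.Eventually.of_forall fun z => ?_)
    have hs : 0 < σ z := hσ z
    have hs2 : (0:ℝ) < σ z ^ 2 := pow_pos hs 2
    have hsqrtpos : (0:ℝ) < √(2 * π) := Real.sqrt_pos.mpr (by positivity)
    have h2le : (2:ℝ) ≤ √(2 * π) := by
      have h4 : √(4:ℝ) = 2 := by
        rw [show (4:ℝ) = 2 ^ 2 by norm_num, Real.sqrt_sq (by norm_num : (0:ℝ) ≤ 2)]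
      rw [← h4]
      exact Real.sqrt_le_sqrt (by nlinarith [Real.pi_gt_three])
    have hsqrt : √(2 * π * σ z ^ 2) = √(2 * π) * σ z := by
      rw [Real.sqrt_mul (by positivity), Real.sqrt_sq hs.le]
    have hφnn : (0:ℝ) ≤ |c z| * ((√(2 * π * σ z ^ 2))⁻¹ * (2 * σ z ^ 2)) := by positivity
    rw [Real.norm_eq_abs, abs_of_nonneg hφnn]
    have hca : |c z| = |η₁ z - η₂ z| / σ z ^ 2 := by
      rw [hcdef]
      simp only
      rw [abs_div, abs_of_pos hs2]
    have e1 : |c z| * ((√(2 * π * σ z ^ 2))⁻¹ * (2 * σ z ^ 2))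
        = 2 * |η₁ z - η₂ z| / (√(2 * π) * σ z) := by
      rw [hca, hsqrt]
      field_simp
    have e2 : 2 * |η₁ z - η₂ z| / (√(2 * π) * σ z) ≤ |η₁ z - η₂ z| / σ z := by
      rw [div_le_div_iff₀ (by positivity) hs]
      nlinarith [abs_nonneg (η₁ z - η₂ z), mul_nonneg (abs_nonneg (η₁ z - η₂ z)) hs.le]
    have e3 : |η₁ z - η₂ z| / σ z ≤ (η₁ z - η₂ z) ^ 2 / (2 * σ z ^ 2) + 1 / 2 := by
      have h2σ : (2:ℝ) * σ z ^ 2 ≠ 0 := by positivity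
      have hsum : (η₁ z - η₂ z) ^ 2 / (2 * σ z ^ 2) + 1 / 2
          = ((η₁ z - η₂ z) ^ 2 + σ z ^ 2) / (2 * σ z ^ 2) := by
        field_simp
      rw [hsum, div_le_div_iff₀ hs (by positivity)]
      nlinarith [sq_nonneg (|η₁ z - η₂ z| - σ z), sq_abs (η₁ z - η₂ z), hs, hs2]
    have e4 : w z = (η₁ z - η₂ z) ^ 2 / (2 * σ z ^ 2) := rfl
    simp only [Pi.add_apply]
    rw [e1]
    linarith
  have hg1int : Integrable (fun p : Z × ℝ => c p.1 * (p.2 - η₁ p.1)) (ν ⊗ₘ κ₁) := by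
    rw [Measure.integrable_compProd_iff hg1m.aestronglyMeasurable]
    refine ⟨Filter.Eventually.of_forall fun z => ?_, ?_⟩
    · have hid : Integrable (fun r : ℝ => r) (gaussianReal (η₁ z) (v z)) :=
        KLGaussAux.integrable_id_gaussianReal _ (hv0 z)
      have hsub : Integrable (fun r : ℝ => r - η₁ z) (gaussianReal (η₁ z) (v z)) :=
        hid.sub (integrable_const _)
      have hmul : Integrable (fun r : ℝ => c z * (r - η₁ z)) (gaussianReal (η₁ z) (v z)) :=
        hsub.const_mul _
      rw [hκ₁ z]
      exact hmul
    · exact hφint.congr (Filter.Eventually.of_forall fun z => (hnorm z).symm)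
  have hgint : Integrable g (ν ⊗ₘ κ₁) := by
    rw [hgdef]
    exact hg1int.add hg2int
  have hinner : ∀ z, ∫ r, g (z, r) ∂κ₁ z = w z := by
    intro z
    have hid : Integrable (fun r : ℝ => r) (gaussianReal (η₁ z) (v z)) :=
      KLGaussAux.integrable_id_gaussianReal _ (hv0 z)
    have hsub : Integrable (fun r : ℝ => r - η₁ z) (gaussianReal (η₁ z) (v z)) :=
      hid.sub (integrable_const _)
    have hmul : Integrable (fun r : ℝ => c z * (r - η₁ z)) (gaussianReal (η₁ z) (v z)) :=
      hsub.const_mul _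
    have hgz : (fun r : ℝ => g (z, r)) = fun r : ℝ => c z * (r - η₁ z) + w z := rfl
    rw [hgz, hκ₁ z, integral_add hmul (integrable_const _), integral_const_mul,
      integral_sub hid (integrable_const _),
      KLGaussAux.integral_id_gaussianReal _ (hv0 z), integral_const, integral_const,
      probReal_univ]
    simp
  have hieq : ∫ p, g p ∂(ν ⊗ₘ κ₁) = ∫ z, w z ∂ν := by
    rw [Measure.integral_compProd hgint]
    exact integral_congr_ae (Filter.Eventually.of_forall hinner)
  have hlogae : (fun p => Real.log (((ν ⊗ₘ κ₁).rnDeriv (ν ⊗ₘ κ₂)) p).toReal) =ᵐ[ν ⊗ₘ κ₁] g :=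
    hrn₁.mono fun p hp => by
      show Real.log (((ν ⊗ₘ κ₁).rnDeriv (ν ⊗ₘ κ₂)) p).toReal = g p
      rw [hp]
      show Real.log (ENNReal.ofReal (ρ p)).toReal = g p
      rw [ENNReal.toReal_ofReal (hρpos p).le]
      exact hlogρ p
  have hintlog : Integrable (fun p => Real.log (((ν ⊗ₘ κ₁).rnDeriv (ν ⊗ₘ κ₂)) p).toReal)
      (ν ⊗ₘ κ₁) := hgint.congr hlogae.symm
  rw [klDiv, if_pos ⟨hac, hintlog⟩]
  congr 1
  rw [integral_congr_ae hlogae, hieq]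
end
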